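/- Let k ≥ 2 and let P : Fin k → ℝ be a probability vector with P i > 0 for all i and ∑ i, P i = 1, and let A(P) be the warm-started fully-connected XY-mixer matrix. Then −1 is the smallest eigenvalue of A(P), and its eigenspace is one-dimensional: every x ∈ ℝ^k with A(P) · x = −x is a scalar multiple of v(P), where v(P)_i = √(P i). Equivalently, for every unit vector x ∈ ℝ^k one has xᵀ A(P) x ≥ −1, with equality if and only if x = ±v(P). -/

import Mathlib

open Matrix Finset

/-- For the warm-started fully-connected XY-mixer `A(P)`,
`-1` is the smallest eigenvalue, with a one-dimensional eigenspace spanned by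
`v(P)` (where `v(P) i = √(P i)`): every `x` with `A(P)·x = -x` is a scalar
multiple of `v(P)`; equivalently, for every unit vector `x` one has
`xᵀ A(P) x ≥ -1`, with equality iff `x = ±v(P)`. -/
theorem statement2 (k : ℕ) (hk : 2 ≤ k) (P : Fin k → ℝ)
    (hpos : ∀ i, 0 < P i) (hsum : ∑ i, P i = 1)
    (A : Matrix (Fin k) (Fin k) ℝ)
    (hA : ∀ i j, A i j =
      if i = j then
        (1 / ((k : ℝ) - 1)) * ∑ l ∈ Finset.univ.erase i, (P l - P i) / (P i + P l)
      else
        -2 * Real.sqrt (P i * P j) / (((k : ℝ) - 1) * (P i + P j)))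
    (v : Fin k → ℝ) (hv : ∀ i, v i = Real.sqrt (P i)) :
    A.mulVec v = -v ∧
    (∀ μ : ℝ, ∀ x : Fin k → ℝ, x ≠ 0 → A.mulVec x = μ • x → -1 ≤ μ) ∧
    (∀ x : Fin k → ℝ, A.mulVec x = -x → ∃ c : ℝ, x = c • v) ∧
    (∀ x : Fin k → ℝ, ∑ i, (x i) ^ 2 = 1 →
      -1 ≤ x ⬝ᵥ A.mulVec x ∧ (x ⬝ᵥ A.mulVec x = -1 ↔ x = v ∨ x = -v)) := by
  have hk2 : (2:ℝ) ≤ (k:ℝ) := by exact_mod_cast hk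
  have hkpos : (0:ℝ) < (k:ℝ) - 1 := by linarith
  have hkne : ((k:ℝ) - 1) ≠ 0 := ne_of_gt hkpos
  have hvpos : ∀ i, 0 < v i := fun i => by rw [hv i]; exact Real.sqrt_pos.2 (hpos i)
  have hv2 : ∀ i, v i ^ 2 = P i := fun i => by rw [hv i, Real.sq_sqrt (hpos i).le]
  have hPP : ∀ i j : Fin k, 0 < P i + P j := fun i j => add_pos (hpos i) (hpos j)
  have hsqrt : ∀ i j, Real.sqrt (P i * P j) = v i * v j := fun i j => by
    rw [hv i, hv j, Real.sqrt_mul (hpos i).le]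
  have hcard : ∀ i : Fin k, ((Finset.univ.erase i).card : ℝ) = (k:ℝ) - 1 := by
    intro i
    rw [Finset.card_erase_of_mem (Finset.mem_univ i), Finset.card_univ, Fintype.card_fin,
      Nat.cast_sub (by omega : 1 ≤ k), Nat.cast_one]
  have hswap : ∀ g : Fin k → Fin k → ℝ,
      ∑ i, ∑ j ∈ Finset.univ.erase i, g i j = ∑ i, ∑ j ∈ Finset.univ.erase i, g j i := by
    intro g
    rw [Finset.sum_comm' (t' := Finset.univ) (s' := fun j => Finset.univ.erase j)]
    intro x y; simp [ne_comm, and_comm]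
  -- the key quadratic-form identity
  have hquad : ∀ x : Fin k → ℝ, x ⬝ᵥ A.mulVec x
      = (1/((k:ℝ)-1)) * ∑ i, ∑ j ∈ Finset.univ.erase i,
          (v j * x i - v i * x j)^2 / (P i + P j) - ∑ i, x i ^ 2 := by
    intro x
    have expand : x ⬝ᵥ A.mulVec x + ∑ i, x i ^ 2
        = ∑ i, ∑ j ∈ Finset.univ.erase i,
            ((1/((k:ℝ)-1)) * ((P j - P i)/(P i + P j)) * x i ^ 2
              + x i * (-2 * (v i * v j) / (((k:ℝ)-1) * (P i + P j))) * x j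
              + (1/((k:ℝ)-1)) * x i ^ 2) := by
      have h1 : x ⬝ᵥ A.mulVec x
          = ∑ i, (x i * (A i i * x i) + ∑ j ∈ Finset.univ.erase i, x i * (A i j * x j)) := by
        simp only [dotProduct, mulVec, dotProduct]
        refine Finset.sum_congr rfl fun i _ => ?_
        rw [← Finset.add_sum_erase _ (fun j => A i j * x j) (mem_univ i), mul_add,
          Finset.mul_sum]
      rw [h1, ← Finset.sum_add_distrib]
      refine Finset.sum_congr rfl fun i _ => ?_
      have hxi : x i ^ 2 = ∑ j ∈ Finset.univ.erase i, (1/((k:ℝ)-1)) * x i ^ 2 := by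
        rw [Finset.sum_const, nsmul_eq_mul, hcard i]
        field_simp
      have hdiag : x i * (A i i * x i)
          = ∑ j ∈ Finset.univ.erase i, (1/((k:ℝ)-1)) * ((P j - P i)/(P i + P j)) * x i ^ 2 := by
        have haux : ∀ S : ℝ, x i * ((1/((k:ℝ)-1)) * S * x i) = S * ((1/((k:ℝ)-1)) * x i ^ 2) :=
          fun S => by ring
        rw [hA i i, if_pos rfl, haux, Finset.sum_mul]
        exact Finset.sum_congr rfl fun j _ => by ring
      have hoff : ∀ j ∈ Finset.univ.erase i, x i * (A i j * x j)
          = x i * (-2 * (v i * v j) / (((k:ℝ)-1) * (P i + P j))) * x j := by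
        intro j hj
        rw [hA i j, if_neg (Finset.ne_of_mem_erase hj).symm, hsqrt i j]
        ring
      conv_rhs => rw [Finset.sum_add_distrib]
      rw [← hxi, hdiag, Finset.sum_congr rfl hoff, ← Finset.sum_add_distrib]
    -- pointwise identity
    have hpt : ∀ i j : Fin k,
        ((1/((k:ℝ)-1)) * ((P j - P i)/(P i + P j)) * x i ^ 2
          + x i * (-2 * (v i * v j) / (((k:ℝ)-1) * (P i + P j))) * x j
          + (1/((k:ℝ)-1)) * x i ^ 2)
        = (1/((k:ℝ)-1)) * ((v j * x i - v i * x j)^2 / (P i + P j))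
          + ((1/((k:ℝ)-1)) * (P j * x i ^ 2 / (P i + P j))
            - (1/((k:ℝ)-1)) * (P i * x j ^ 2 / (P j + P i))) := by
      intro i j
      have hd : P i + P j ≠ 0 := ne_of_gt (hPP i j)
      have hd' : P j + P i ≠ 0 := ne_of_gt (hPP j i)
      rw [← hv2 i, ← hv2 j] at hd hd' ⊢
      field_simp
      ring
    rw [Finset.sum_congr rfl (fun i _ => Finset.sum_congr rfl (fun j _ => hpt i j))]
      at expand
    have hbc : ∑ i, ∑ j ∈ Finset.univ.erase i, (1/((k:ℝ)-1)) * (P j * x i ^ 2 / (P i + P j))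
        = ∑ i, ∑ j ∈ Finset.univ.erase i, (1/((k:ℝ)-1)) * (P i * x j ^ 2 / (P j + P i)) :=
      hswap fun i j => (1/((k:ℝ)-1)) * (P j * x i ^ 2 / (P i + P j))
    have hsimp : ∑ i, ∑ j ∈ Finset.univ.erase i,
        ((1/((k:ℝ)-1)) * ((v j * x i - v i * x j)^2 / (P i + P j))
          + ((1/((k:ℝ)-1)) * (P j * x i ^ 2 / (P i + P j))
            - (1/((k:ℝ)-1)) * (P i * x j ^ 2 / (P j + P i))))
        = ∑ i, ∑ j ∈ Finset.univ.erase i,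
            (1/((k:ℝ)-1)) * ((v j * x i - v i * x j)^2 / (P i + P j)) := by
      simp only [Finset.sum_add_distrib, Finset.sum_sub_distrib]
      rw [hbc]
      ring
    rw [hsimp] at expand
    have hmul : (1/((k:ℝ)-1)) * ∑ i, ∑ j ∈ Finset.univ.erase i,
        (v j * x i - v i * x j)^2 / (P i + P j)
        = ∑ i, ∑ j ∈ Finset.univ.erase i,
            (1/((k:ℝ)-1)) * ((v j * x i - v i * x j)^2 / (P i + P j)) := by
      rw [Finset.mul_sum]
      exact Finset.sum_congr rfl fun i _ => by rw [Finset.mul_sum]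
    rw [hmul]
    linarith [expand]
  -- eigenvector property
  have hAv : A.mulVec v = -v := by
    funext i
    have h0 : (A.mulVec v) i = ∑ j, A i j * v j := rfl
    rw [h0, ← Finset.add_sum_erase _ (fun j => A i j * v j) (mem_univ i)]
    have hdiag : A i i * v i
        = ∑ j ∈ Finset.univ.erase i, (1/((k:ℝ)-1)) * ((P j - P i)/(P i + P j)) * v i := by
      have haux : ∀ S : ℝ, (1/((k:ℝ)-1)) * S * v i = S * ((1/((k:ℝ)-1)) * v i) :=
        fun S => by ring
      rw [hA i i, if_pos rfl, haux, Finset.sum_mul]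
      exact Finset.sum_congr rfl fun j _ => by ring
    have hoff : ∀ j ∈ Finset.univ.erase i,
        (1/((k:ℝ)-1)) * ((P j - P i)/(P i + P j)) * v i + A i j * v j
          = -(v i) / ((k:ℝ)-1) := by
      intro j hj
      rw [hA i j, if_neg (Finset.ne_of_mem_erase hj).symm, hsqrt i j]
      have hd : P i + P j ≠ 0 := ne_of_gt (hPP i j)
      rw [← hv2 i, ← hv2 j] at hd ⊢
      field_simp
      ring
    rw [hdiag, ← Finset.sum_add_distrib, Finset.sum_congr rfl hoff, Finset.sum_const,
      nsmul_eq_mul, hcard i]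
    field_simp
    ring_nf
    rfl
  have hSnn : ∀ x : Fin k → ℝ,
      0 ≤ ∑ i, ∑ j ∈ Finset.univ.erase i, (v j * x i - v i * x j)^2 / (P i + P j) :=
    fun x => Finset.sum_nonneg fun i _ => Finset.sum_nonneg fun j _ =>
      div_nonneg (sq_nonneg _) (hPP i j).le
  -- from S = 0, deduce proportionality
  have hprop : ∀ x : Fin k → ℝ,
      (∑ i, ∑ j ∈ Finset.univ.erase i, (v j * x i - v i * x j)^2 / (P i + P j) = 0) →
      ∀ i j : Fin k, v j * x i = v i * x j := by
    intro x hS0 i j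
    rcases eq_or_ne i j with rfl | hij
    · ring
    have houter := (Finset.sum_eq_zero_iff_of_nonneg (fun i _ =>
      Finset.sum_nonneg fun j _ => div_nonneg (sq_nonneg _) (hPP i j).le)).1 hS0
        i (mem_univ i)
    have hinner := (Finset.sum_eq_zero_iff_of_nonneg (fun j _ =>
      div_nonneg (sq_nonneg _) (hPP i j).le)).1 houter j
        (Finset.mem_erase.2 ⟨hij.symm, mem_univ j⟩)
    have h1 := (div_eq_zero_iff.1 hinner).resolve_right (ne_of_gt (hPP i j))
    have h2 := pow_eq_zero_iff (n := 2) (by norm_num) |>.1 h1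
    linarith [h2]
  have hv1 : ∑ i, v i ^ 2 = 1 := by
    rw [Finset.sum_congr rfl fun i _ => hv2 i, hsum]
  obtain ⟨i0⟩ : Nonempty (Fin k) := ⟨⟨0, by omega⟩⟩
  have hvne : v i0 ≠ 0 := ne_of_gt (hvpos i0)
  refine ⟨hAv, ?_, ?_, ?_⟩
  · -- eigenvalue bound
    intro μ x hx hAx
    have hxx : (0:ℝ) < ∑ i, x i ^ 2 := by
      rcases Function.ne_iff.1 hx with ⟨i, hi⟩
      have hne : x i ≠ 0 := by simpa using hi
      have h3 : (0:ℝ) < x i ^ 2 :=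
        lt_of_le_of_ne (sq_nonneg _) (Ne.symm (pow_ne_zero 2 hne))
      exact lt_of_lt_of_le h3 (Finset.single_le_sum (fun j _ => sq_nonneg (x j)) (mem_univ i))
    have hdx : x ⬝ᵥ A.mulVec x = μ * ∑ i, x i ^ 2 := by
      rw [hAx]
      have h4 : x ⬝ᵥ (μ • x) = ∑ i, μ * x i ^ 2 :=
        Finset.sum_congr rfl fun i _ => by simp only [Pi.smul_apply, smul_eq_mul]; ring
      rw [h4, ← Finset.mul_sum]
    have hq := hquad x
    rw [hdx] at hq
    nlinarith [mul_nonneg (one_div_nonneg.2 hkpos.le) (hSnn x)]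
  · -- kernel
    intro x hAx
    have hdx : x ⬝ᵥ A.mulVec x = - ∑ i, x i ^ 2 := by
      rw [hAx]
      have h4 : x ⬝ᵥ (-x) = ∑ i, -(x i ^ 2) :=
        Finset.sum_congr rfl fun i _ => by simp only [Pi.neg_apply]; ring
      rw [h4, Finset.sum_neg_distrib]
    have hq := hquad x
    rw [hdx] at hq
    have hS0 : ∑ i, ∑ j ∈ Finset.univ.erase i, (v j * x i - v i * x j)^2 / (P i + P j) = 0 := by
      have h1 : (1/((k:ℝ)-1)) * ∑ i, ∑ j ∈ Finset.univ.erase i,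
          (v j * x i - v i * x j)^2 / (P i + P j) = 0 := by linarith
      have h2 : (1/((k:ℝ)-1)) ≠ 0 := by positivity
      exact (mul_eq_zero.1 h1).resolve_left h2
    have hterm := hprop x hS0
    refine ⟨x i0 / v i0, ?_⟩
    funext i
    simp only [Pi.smul_apply, smul_eq_mul]
    rw [div_mul_eq_mul_div, eq_div_iff hvne]
    linarith [hterm i i0]
  · -- unit vectors
    intro x hxu
    have hq := hquad x
    rw [hxu] at hq
    constructor
    · nlinarith [mul_nonneg (one_div_nonneg.2 hkpos.le) (hSnn x)]
    constructor
    · intro heq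
      have hS0 : ∑ i, ∑ j ∈ Finset.univ.erase i, (v j * x i - v i * x j)^2 / (P i + P j) = 0 := by
        have h1 : (1/((k:ℝ)-1)) * ∑ i, ∑ j ∈ Finset.univ.erase i,
            (v j * x i - v i * x j)^2 / (P i + P j) = 0 := by linarith
        have h2 : (1/((k:ℝ)-1)) ≠ 0 := by positivity
        exact (mul_eq_zero.1 h1).resolve_left h2
      have hterm := hprop x hS0
      set c := x i0 / v i0 with hc
      have hxc : ∀ i, x i = c * v i := by
        intro i
        rw [hc, div_mul_eq_mul_div, eq_div_iff hvne]
        linarith [hterm i i0]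
      have hc2 : c ^ 2 = 1 := by
        have h5 : ∑ i, (c * v i) ^ 2 = 1 := by
          rw [← hxu]; exact Finset.sum_congr rfl fun i _ => by rw [hxc i]
        have h6 : c ^ 2 * ∑ i, v i ^ 2 = 1 := by
          rw [Finset.mul_sum, ← h5]
          exact Finset.sum_congr rfl fun i _ => by ring
        rw [hv1, mul_one] at h6
        exact h6
      have h7 : (c - 1) * (c + 1) = 0 := by nlinarith
      rcases mul_eq_zero.1 h7 with h | h
      · left; funext i
        rw [hxc i, show c = 1 by linarith, one_mul]
      · right; funext i
        rw [hxc i, show c = -1 by linarith]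
        simp
    · rintro (rfl | rfl)
      · rw [hAv]
        have h4 : x ⬝ᵥ (-x) = ∑ i, -(x i ^ 2) :=
          Finset.sum_congr rfl fun i _ => by simp only [Pi.neg_apply]; ring
        rw [h4, Finset.sum_neg_distrib, hv1]
      · have hneg : A.mulVec (-v) = v := by rw [Matrix.mulVec_neg, hAv, neg_neg]
        rw [hneg]
        have h4 : (-v) ⬝ᵥ v = ∑ i, -(v i ^ 2) :=
          Finset.sum_congr rfl fun i _ => by simp only [Pi.neg_apply]; ring
        rw [h4, Finset.sum_neg_distrib, hv1]
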